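/- Let F be the joint distribution function of an ℝ^d-valued random vector, let α > 0, β > 0, γ > 0, κ > 0, λ > 1, z_0 ≥ 0, and let Φ:[0,∞)→[0,∞) be an increasing bijection such that w_F(y) ≤ β ( Φ(y^{−α}) )^{−γ} for all y > 0 and Φ(2z) ≤ λ Φ(z) for all z ≥ z_0. Define Ψ(z) := d ( w_F^←(1/z) )^{−α} + 1 with w_F^←(y) := inf{ δ > 0 : w_F(δ) ≥ y }. Then there exists a constant C < ∞ such that ( Φ(2Ψ(z)) )^{κ} ≤ C z^{κ/γ} for all sufficiently large z; in particular ( Φ(2Ψ(z)) )^{κ} = O( z^{κ/γ} ) as z → ∞. -/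

import Mathlib

open MeasureTheory Filter Set
open scoped Topology

noncomputable section

/-- The modulus of continuity of a function `F : ℝ^d → ℝ`. -/
def modulus {d : ℕ} (F : (Fin d → ℝ) → ℝ) (δ : ℝ) : ℝ :=
  sSup {c : ℝ | ∃ s t : Fin d → ℝ, ‖t - s‖ ≤ δ ∧ c = |F t - F s|}

/-- The generalized inverse `w_F^←(y) = inf{δ > 0 : w_F(δ) ≥ y}`. -/
def modulusInv {d : ℕ} (F : (Fin d → ℝ) → ℝ) (y : ℝ) : ℝ :=
  sInf {δ : ℝ | 0 < δ ∧ y ≤ modulus F δ}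

/-- key step in the proof of Theorem 3 of the paper: if
`w_F(y) ≤ β Φ(y^{-α})^{-γ}` for an increasing bijection `Φ` of `[0,∞)` satisfying the
doubling condition `Φ(2z) ≤ λ Φ(z)` for `z ≥ z₀`, and `Ψ(z) = d (w_F^←(1/z))^{-α} + 1`,
then `Φ(2Ψ(z))^κ = O(z^{κ/γ})` as `z → ∞`. -/
theorem stmt18 {Ω : Type*} [MeasurableSpace Ω] {d : ℕ}
    (P : Measure Ω) [IsProbabilityMeasure P]
    (X : Ω → (Fin d → ℝ)) (hX : Measurable X)
    (F : (Fin d → ℝ) → ℝ) (hF : F = fun t => (P {ω | ∀ i, X ω i ≤ t i}).toReal)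
    (α β γ κ lam z₀ : ℝ) (hα : 0 < α) (hβ : 0 < β) (hγ : 0 < γ) (hκ : 0 < κ)
    (hlam : 1 < lam) (hz₀ : 0 ≤ z₀)
    (Φ Φinv : ℝ → ℝ)
    (hΦmono : StrictMonoOn Φ (Set.Ici 0))
    (hΦmaps : Set.MapsTo Φ (Set.Ici 0) (Set.Ici 0))
    (hinv₁ : ∀ x ∈ Set.Ici (0 : ℝ), Φinv (Φ x) = x)
    (hinv₂ : ∀ y ∈ Set.Ici (0 : ℝ), Φ (Φinv y) = y ∧ Φinv y ∈ Set.Ici (0 : ℝ))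
    (hbound : ∀ y : ℝ, 0 < y → modulus F y ≤ β * (Φ (y ^ (-α))) ^ (-γ))
    (hdouble : ∀ z : ℝ, z₀ ≤ z → Φ (2 * z) ≤ lam * Φ z)
    (Ψ : ℝ → ℝ) (hΨ : Ψ = fun z => (d : ℝ) * (modulusInv F (1 / z)) ^ (-α) + 1) :
    ∃ C z₁ : ℝ, ∀ z : ℝ, z₁ ≤ z → (Φ (2 * Ψ z)) ^ κ ≤ C * z ^ (κ / γ) := by
  subst hΨ
  have hαne : -α ≠ 0 := neg_ne_zero.mpr hα.ne'
  have hF0 : ∀ t, (0:ℝ) ≤ F t := by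
    intro t; rw [hF]; exact ENNReal.toReal_nonneg
  have hF1 : ∀ t, F t ≤ 1 := by
    intro t; rw [hF]
    exact (ENNReal.toReal_mono ENNReal.one_ne_top prob_le_one).trans
      (le_of_eq ENNReal.toReal_one)
  have hbdd : ∀ δ : ℝ, BddAbove {c : ℝ | ∃ s t : Fin d → ℝ, ‖t - s‖ ≤ δ ∧ c = |F t - F s|} := by
    intro δ
    refine ⟨1, ?_⟩
    rintro c ⟨s, t, -, rfl⟩
    rw [abs_sub_le_iff]
    constructor <;> nlinarith [hF0 s, hF1 s, hF0 t, hF1 t]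
  have hne : ∀ δ : ℝ, 0 ≤ δ →
      {c : ℝ | ∃ s t : Fin d → ℝ, ‖t - s‖ ≤ δ ∧ c = |F t - F s|}.Nonempty := by
    intro δ hδ
    exact ⟨|F 0 - F 0|, 0, 0, by simpa using hδ, rfl⟩
  have hmono : ∀ δ' δ : ℝ, 0 ≤ δ' → δ' ≤ δ → modulus F δ' ≤ modulus F δ := by
    intro δ' δ h1 h2
    refine csSup_le_csSup (hbdd δ) (hne δ' h1) ?_
    rintro c ⟨s, t, h, hc⟩
    exact ⟨s, t, h.trans h2, hc⟩
  have hΦ0 : ∀ x : ℝ, 0 ≤ x → 0 ≤ Φ x := fun x hx => hΦmaps hx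
  have hinvmono : ∀ a b : ℝ, 0 ≤ a → a ≤ b → Φinv a ≤ Φinv b := by
    intro a b ha hab
    by_contra h
    push_neg at h
    have hb : (0:ℝ) ≤ b := ha.trans hab
    have h2 := hΦmono ((hinv₂ b hb).2) ((hinv₂ a ha).2) h
    rw [(hinv₂ a ha).1, (hinv₂ b hb).1] at h2
    exact absurd hab (not_le.mpr h2)
  have hkey : ∀ z δ : ℝ, 0 < z → 0 < δ → 1/z ≤ modulus F δ →
      δ ^ (-α) ≤ Φinv ((β*z) ^ (1/γ)) := by
    intro z δ hz hδ hle
    have hδα : (0:ℝ) ≤ δ ^ (-α) := Real.rpow_nonneg hδ.le _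
    set u := Φ (δ ^ (-α)) with hu
    have hu0 : 0 ≤ u := hΦ0 _ hδα
    have hb := hbound δ hδ
    have hpos : 0 < u := by
      rcases hu0.lt_or_eq with h | h
      · exact h
      · exfalso
        rw [← hu, ← h, Real.zero_rpow (neg_ne_zero.mpr hγ.ne'), mul_zero] at hb
        have h1z : (0:ℝ) < 1/z := by positivity
        linarith [hle.trans hb]
    have hγpos : 0 < u ^ γ := Real.rpow_pos_of_pos hpos _
    rw [← hu, Real.rpow_neg hu0, ← div_eq_mul_inv] at hb
    have h3 : 1/z ≤ β / u ^ γ := hle.trans hb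
    have h4 := (div_le_div_iff₀ hz hγpos).mp h3
    have h2 : u ^ γ ≤ β * z := by linarith
    have h5 : u ≤ (β*z) ^ (1/γ) := by
      have heq : u = (u ^ γ) ^ (1/γ) := by
        rw [← Real.rpow_mul hu0, mul_one_div, div_self hγ.ne', Real.rpow_one]
      rw [heq]
      exact Real.rpow_le_rpow hγpos.le h2 (by positivity)
    calc δ ^ (-α) = Φinv u := (hinv₁ _ hδα).symm
      _ ≤ Φinv ((β*z)^(1/γ)) := hinvmono _ _ hu0 h5
  have hiter : ∀ (j : ℕ) (y : ℝ), z₀ ≤ y → 0 ≤ y → Φ (2^j * y) ≤ lam^j * Φ y := by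
    intro j
    induction j with
    | zero => intro y _ _; simp
    | succ j ih =>
      intro y hy hy0
      have h2j : (1:ℝ) ≤ 2^j := one_le_pow₀ (by norm_num)
      have h1 : z₀ ≤ 2^j * y := le_trans hy (le_mul_of_one_le_left hy0 h2j)
      have heq : (2:ℝ)^(j+1) * y = 2 * (2^j * y) := by ring
      calc Φ (2^(j+1) * y) = Φ (2 * (2^j * y)) := by rw [heq]
        _ ≤ lam * Φ (2^j * y) := hdouble _ h1
        _ ≤ lam * (lam^j * Φ y) :=
            mul_le_mul_of_nonneg_left (ih y hy hy0) (by linarith)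
        _ = lam^(j+1) * Φ y := by ring
  set c : ℝ := max z₀ 1 with hc
  set n : ℕ := d + 2 with hn
  refine ⟨(lam ^ n) ^ κ * β ^ (κ/γ), max 1 ((max (Φ c) 1) ^ γ / β), ?_⟩
  intro z hz
  have hz1 : (1:ℝ) ≤ z := le_trans (le_max_left _ _) hz
  have hz0 : (0:ℝ) < z := by linarith
  set M : ℝ := Φinv ((β*z) ^ (1/γ)) with hM
  have hβz : (0:ℝ) ≤ (β*z) ^ (1/γ) := Real.rpow_nonneg (by positivity) _
  have hM0 : (0:ℝ) ≤ M := (hinv₂ _ hβz).2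
  have hδ0 : 0 ≤ modulusInv F (1/z) := Real.sInf_nonneg (fun x hx => hx.1.le)
  have hδM : modulusInv F (1/z) ^ (-α) ≤ M := by
    rcases hδ0.eq_or_lt with h | h
    · rw [← h, Real.zero_rpow hαne]; exact hM0
    · have hSne : {δ : ℝ | 0 < δ ∧ 1/z ≤ modulus F δ}.Nonempty := by
        by_contra hcon
        rw [Set.not_nonempty_iff_eq_empty] at hcon
        rw [modulusInv, hcon, Real.sInf_empty] at h
        exact lt_irrefl _ h
      have key : ∀ δ ∈ Ioi (modulusInv F (1/z)), δ ^ (-α) ≤ M := by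
        intro δ hδ
        have hδ' : sInf {δ : ℝ | 0 < δ ∧ 1/z ≤ modulus F δ} < δ := hδ
        obtain ⟨δ', hδ'S, hδ'lt⟩ :=
          (csInf_lt_iff ⟨0, fun x hx => hx.1.le⟩ hSne).mp hδ'
        exact hkey z δ hz0 (h.trans hδ)
          (hδ'S.2.trans (hmono δ' δ hδ'S.1.le hδ'lt.le))
      have cont : Tendsto (fun δ : ℝ => δ ^ (-α)) (𝓝[>] (modulusInv F (1/z)))
          (𝓝 (modulusInv F (1/z) ^ (-α))) :=
        ((Real.continuousAt_rpow_const _ _ (Or.inl h.ne')).tendsto).mono_left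
          nhdsWithin_le_nhds
      exact le_of_tendsto cont (eventually_nhdsWithin_of_forall key)
  have hd0 : (0:ℝ) ≤ (d:ℝ) := Nat.cast_nonneg d
  have hΨle : (d:ℝ) * modulusInv F (1/z) ^ (-α) + 1 ≤ (d:ℝ) * M + 1 := by
    nlinarith [Real.rpow_nonneg hδ0 (-α)]
  set x : ℝ := max M c with hx
  have hc1 : (1:ℝ) ≤ c := le_max_right _ _
  have hcx : c ≤ x := le_max_right M c
  have hx1 : (1:ℝ) ≤ x := hc1.trans hcx
  have hx0 : (0:ℝ) ≤ x := by linarith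
  have hxz₀ : z₀ ≤ x := le_trans (le_max_left _ _) hcx
  have h2pow : (2:ℝ)^n = 2^d * 4 := by rw [hn, pow_add]; norm_num
  have hdpow : (d:ℝ) + 1 ≤ 2^d := by exact_mod_cast Nat.lt_two_pow_self (n := d)
  have h2n : (2:ℝ) * ((d:ℝ) * M + 1) ≤ 2^n * x := by
    have h1 : M ≤ x := le_max_left _ _
    nlinarith [mul_le_mul_of_nonneg_left h1 hd0,
      mul_le_mul_of_nonneg_right hdpow hx0]
  have h0Ψ : (0:ℝ) ≤ (d:ℝ) * modulusInv F (1/z) ^ (-α) + 1 := by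
    nlinarith [Real.rpow_nonneg hδ0 (-α)]
  have hchain : 2 * ((d:ℝ) * modulusInv F (1/z) ^ (-α) + 1) ≤ 2^n * x := by
    linarith
  have hΨx : Φ (2 * ((d:ℝ) * modulusInv F (1/z) ^ (-α) + 1)) ≤ lam^n * Φ x := by
    calc Φ (2 * ((d:ℝ) * modulusInv F (1/z) ^ (-α) + 1)) ≤ Φ (2^n * x) :=
          hΦmono.monotoneOn (by linarith : (0:ℝ) ≤ _)
            (mul_nonneg (by positivity) hx0) hchain
      _ ≤ lam^n * Φ x := hiter n x hxz₀ hx0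
  have hΦx : Φ x ≤ (β*z) ^ (1/γ) := by
    rcases max_cases M c with ⟨h1, h2⟩ | ⟨h1, h2⟩
    · rw [hx, h1, hM]
      exact le_of_eq (hinv₂ _ hβz).1
    · rw [hx, h1]
      have hzc : (max (Φ c) 1) ^ γ / β ≤ z := le_trans (le_max_right _ _) hz
      rw [div_le_iff₀ hβ] at hzc
      have hle2 : (max (Φ c) 1) ^ γ ≤ β * z := by linarith
      have hm0 : (0:ℝ) ≤ max (Φ c) 1 := le_trans zero_le_one (le_max_right _ _)
      have h4 : max (Φ c) 1 ≤ (β*z)^(1/γ) := by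
        calc max (Φ c) 1 = ((max (Φ c) 1) ^ γ) ^ (1/γ) := by
              rw [← Real.rpow_mul hm0, mul_one_div, div_self hγ.ne', Real.rpow_one]
          _ ≤ (β*z)^(1/γ) :=
              Real.rpow_le_rpow (Real.rpow_nonneg hm0 _) hle2 (by positivity)
      exact le_trans (le_max_left _ _) h4
  have hlamn : (0:ℝ) ≤ lam^n := pow_nonneg (by linarith) n
  have hfinal : Φ (2 * ((d:ℝ) * modulusInv F (1/z) ^ (-α) + 1)) ≤ lam^n * (β*z)^(1/γ) :=
    hΨx.trans (mul_le_mul_of_nonneg_left hΦx hlamn)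
  show Φ (2 * ((d:ℝ) * modulusInv F (1/z) ^ (-α) + 1)) ^ κ ≤ _
  calc Φ (2 * ((d:ℝ) * modulusInv F (1/z) ^ (-α) + 1)) ^ κ
      ≤ (lam^n * (β*z)^(1/γ)) ^ κ :=
        Real.rpow_le_rpow (hΦ0 _ (by linarith)) hfinal hκ.le
    _ = (lam ^ n) ^ κ * β ^ (κ/γ) * z ^ (κ/γ) := by
        rw [Real.mul_rpow hlamn hβz, ← Real.rpow_mul (by positivity : (0:ℝ) ≤ β*z)]
        have : 1/γ * κ = κ/γ := by ring
        rw [this, Real.mul_rpow hβ.le hz0.le, mul_assoc]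

end
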